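/- Let R be a commutative ring and A an R-algebra that is finitely generated as an R-module. Let I be a two-sided ideal of A and let I' ⊆ R be the preimage of I under the structure map R → A. Then the set of preimages in R of prime two-sided ideals q of A with I ⊆ q equals the set of prime ideals p of R with I' ⊆ p. In particular, every prime ideal of R containing I' is the preimage of some prime two-sided ideal of A containing I. -/

import Mathlib

/-- A subset `I` of a ring `B` is a two-sided ideal: it contains `0`, is closed under
addition, and is closed under multiplication by arbitrary ring elements on both sides. -/
def IsTwoSidedIdealSet {B : Type*} [Ring B] (I : Set B) : Prop :=
  (0 : B) ∈ I ∧ (∀ a ∈ I, ∀ b ∈ I, a + b ∈ I) ∧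
    (∀ (x : B), ∀ a ∈ I, x * a ∈ I) ∧ (∀ (x : B), ∀ a ∈ I, a * x ∈ I)

/-- A subset `I` of a ring `B` is a prime two-sided ideal: it is a proper two-sided ideal
such that whenever `a * x * b ∈ I` for all `x`, either `a ∈ I` or `b ∈ I`. -/
def IsPrimeTwoSidedIdeal {B : Type*} [Ring B] (I : Set B) : Prop :=
  IsTwoSidedIdealSet I ∧ I ≠ Set.univ ∧
    ∀ a b : B, (∀ x : B, a * x * b ∈ I) → a ∈ I ∨ b ∈ I

section Aux

variable {R A : Type*} [CommRing R] [Ring A] [Algebra R A]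

/-- A two-sided ideal set as an `R`-submodule of `A`. -/
def tsiSubmodule (I : Set A) (hI : IsTwoSidedIdealSet I) : Submodule R A where
  carrier := I
  zero_mem' := hI.1
  add_mem' := fun {a b} ha hb => hI.2.1 a ha b hb
  smul_mem' := fun r a ha => by
    rw [Algebra.smul_def]; exact hI.2.2.1 _ _ ha

lemma mem_tsiSubmodule_iff (I : Set A) (hI : IsTwoSidedIdealSet I) (x : A) :
    x ∈ tsiSubmodule (R := R) I hI ↔ x ∈ I := Iff.rfl

lemma mul_mem_smul_top (p : Ideal R) (x : A) {n : A}
    (hn : n ∈ p • (⊤ : Submodule R A)) : x * n ∈ p • (⊤ : Submodule R A) := by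
  refine Submodule.smul_induction_on (p := fun z => x * z ∈ p • (⊤ : Submodule R A)) hn ?_ ?_
  · intro r hr y _
    rw [mul_smul_comm]
    exact Submodule.smul_mem_smul hr trivial
  · intro a b ha hb
    rw [mul_add]
    exact add_mem ha hb

lemma smul_top_mem_mul (p : Ideal R) (x : A) {n : A}
    (hn : n ∈ p • (⊤ : Submodule R A)) : n * x ∈ p • (⊤ : Submodule R A) := by
  refine Submodule.smul_induction_on (p := fun z => z * x ∈ p • (⊤ : Submodule R A)) hn ?_ ?_
  · intro r hr y _
    rw [smul_mul_assoc]
    exact Submodule.smul_mem_smul hr trivial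
  · intro a b ha hb
    rw [add_mul]
    exact add_mem ha hb

/-- The key integrality/Nakayama step: if `t` maps into `I + p·A` then `t ∈ p`. -/
lemma crux [Module.Finite R A] (I : Set A) (hI : IsTwoSidedIdealSet I)
    (p : Ideal R) (hp : p.IsPrime)
    (hIp : ⇑(algebraMap R A) ⁻¹' I ⊆ (p : Set R)) {t : R}
    (ht : algebraMap R A t ∈ tsiSubmodule (R := R) I hI ⊔ p • (⊤ : Submodule R A)) :
    t ∈ p := by
  classical
  set Im : Submodule R A := tsiSubmodule (R := R) I hI with hIm
  let M := A ⧸ Im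
  haveI : Module.Finite R M :=
    Module.Finite.of_surjective Im.mkQ (Submodule.mkQ_surjective Im)
  obtain ⟨i, hi, n, hn, hin⟩ := Submodule.mem_sup.1 ht
  have hrange : LinearMap.range (LinearMap.lsmul R M t) ≤ p • (⊤ : Submodule R M) := by
    rintro _ ⟨m, rfl⟩
    obtain ⟨a, rfl⟩ := Submodule.mkQ_surjective Im m
    have hta : t • a = a * i + a * n := by
      rw [Algebra.smul_def, Algebra.commutes, ← hin, mul_add]
    have h1 : LinearMap.lsmul R M t (Im.mkQ a) = Im.mkQ (a * n) := by
      have hai : a * i ∈ Im := hI.2.2.1 a i hi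
      have hz : Im.mkQ (a * i) = 0 := (Submodule.Quotient.mk_eq_zero Im).2 hai
      rw [LinearMap.lsmul_apply, ← map_smul, hta, map_add, hz, zero_add]
    rw [h1]
    have : Im.mkQ (a * n) ∈ (p • (⊤ : Submodule R A)).map Im.mkQ :=
      Submodule.mem_map_of_mem (mul_mem_smul_top p a hn)
    rw [Submodule.map_smul''] at this
    exact Submodule.smul_mono le_rfl le_top this
  obtain ⟨P, hmonic, -, hcoeff, haev⟩ :=
    LinearMap.exists_monic_and_coeff_mem_pow_and_aeval_eq_zero_of_range_le_smul R
      (LinearMap.lsmul R M t) p hrange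
  -- evaluate at the class of 1
  have hend : LinearMap.lsmul R M t = algebraMap R (Module.End R M) t := by
    ext m
    rfl
  have heval : Polynomial.aeval (LinearMap.lsmul R M t) P
      = algebraMap R (Module.End R M) (P.eval t) := by
    rw [hend, Polynomial.aeval_algebraMap_apply_eq_algebraMap_eval]
  have h0 : (P.eval t) • (Im.mkQ 1) = 0 := by
    have := congrArg (fun f : Module.End R M => f (Im.mkQ 1)) (heval ▸ haev)
    simpa [Module.algebraMap_end_apply] using this
  have hev_mem : P.eval t ∈ p := by
    apply hIp
    have : Im.mkQ ((P.eval t) • (1 : A)) = 0 := by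
      rw [map_smul]; exact h0
    have h2 : (P.eval t) • (1 : A) ∈ Im := (Submodule.Quotient.mk_eq_zero Im).1 this
    rw [Algebra.smul_def, mul_one] at h2
    exact h2
  -- extract that t ^ natDegree ∈ p
  set d := P.natDegree with hd
  have hsum : P.eval t = (∑ i ∈ Finset.range d, P.coeff i * t ^ i) + t ^ d := by
    rw [Polynomial.eval_eq_sum_range, Finset.sum_range_succ, hmonic.coeff_natDegree, one_mul]
  have hlow : (∑ i ∈ Finset.range d, P.coeff i * t ^ i) ∈ p := by
    refine Ideal.sum_mem p ?_
    intro i hi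
    have hdi : d - i ≠ 0 := Nat.sub_ne_zero_of_lt (Finset.mem_range.1 hi)
    exact Ideal.mul_mem_right _ p (Ideal.pow_le_self hdi (hcoeff i))
  have hpow : t ^ d ∈ p := by
    have : t ^ d = P.eval t - (∑ i ∈ Finset.range d, P.coeff i * t ^ i) := by
      rw [hsum]; ring
    rw [this]
    exact Ideal.sub_mem p hev_mem hlow
  exact hp.mem_of_pow_mem d hpow

/-- The additive submonoid of `A` generated by all `x * a * y`. -/
def genSet (a : A) : AddSubmonoid A :=
  AddSubmonoid.closure {w : A | ∃ x y, w = x * a * y}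

lemma self_mem_genSet (a : A) : a ∈ genSet a := by
  apply AddSubmonoid.subset_closure
  exact ⟨1, 1, by rw [one_mul, mul_one]⟩

lemma mul_left_mem_genSet (a x : A) {s : A} (hs : s ∈ genSet a) : x * s ∈ genSet a := by
  induction hs using AddSubmonoid.closure_induction with
  | mem w hw =>
      obtain ⟨u, v, rfl⟩ := hw
      apply AddSubmonoid.subset_closure
      exact ⟨x * u, v, by rw [mul_assoc x u, mul_assoc x]⟩
  | zero => rw [mul_zero]; exact (genSet a).zero_mem
  | add s₁ s₂ _ _ h1 h2 => rw [mul_add]; exact (genSet a).add_mem h1 h2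

lemma mul_right_mem_genSet (a x : A) {s : A} (hs : s ∈ genSet a) : s * x ∈ genSet a := by
  induction hs using AddSubmonoid.closure_induction with
  | mem w hw =>
      obtain ⟨u, v, rfl⟩ := hw
      apply AddSubmonoid.subset_closure
      exact ⟨u, v * x, by rw [← mul_assoc]⟩
  | zero => rw [zero_mul]; exact (genSet a).zero_mem
  | add s₁ s₂ _ _ h1 h2 => rw [add_mul]; exact (genSet a).add_mem h1 h2

lemma genSet_mul_genSet {a b : A} {m : Set A} (hm : IsTwoSidedIdealSet m)
    (h : ∀ x : A, a * x * b ∈ m) {s s' : A}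
    (hs : s ∈ genSet a) (hs' : s' ∈ genSet b) : s * s' ∈ m := by
  induction hs using AddSubmonoid.closure_induction with
  | mem w hw =>
      obtain ⟨u, v, rfl⟩ := hw
      induction hs' using AddSubmonoid.closure_induction with
      | mem w' hw' =>
          obtain ⟨z, y, rfl⟩ := hw'
          have : u * a * v * (z * b * y) = u * (a * (v * z) * b) * y := by
            noncomm_ring
          rw [this]
          exact hm.2.2.2 y _ (hm.2.2.1 u _ (h (v * z)))
      | zero => rw [mul_zero]; exact hm.1
      | add x y _ _ hx hy => rw [mul_add]; exact hm.2.1 _ hx _ hy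
  | zero => rw [zero_mul]; exact hm.1
  | add x y _ _ hx hy => rw [add_mul]; exact hm.2.1 _ hx _ hy

/-- `m + ⟨a⟩` as a set. -/
def bigSet (m : Set A) (a : A) : Set A :=
  {z | ∃ n ∈ m, ∃ s ∈ genSet a, z = n + s}

lemma subset_bigSet (m : Set A) (hm : IsTwoSidedIdealSet m) (a : A) : m ⊆ bigSet m a :=
  fun n hn => ⟨n, hn, 0, (genSet a).zero_mem, by rw [add_zero]⟩

lemma mem_bigSet_self (m : Set A) (hm : IsTwoSidedIdealSet m) (a : A) : a ∈ bigSet m a :=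
  ⟨0, hm.1, a, self_mem_genSet a, by rw [zero_add]⟩

lemma bigSet_isTwoSided (m : Set A) (hm : IsTwoSidedIdealSet m) (a : A) :
    IsTwoSidedIdealSet (bigSet m a) := by
  refine ⟨⟨0, hm.1, 0, (genSet a).zero_mem, by rw [add_zero]⟩, ?_, ?_, ?_⟩
  · rintro _ ⟨n₁, hn₁, s₁, hs₁, rfl⟩ _ ⟨n₂, hn₂, s₂, hs₂, rfl⟩
    exact ⟨n₁ + n₂, hm.2.1 _ hn₁ _ hn₂, s₁ + s₂, (genSet a).add_mem hs₁ hs₂, by abel⟩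
  · rintro x _ ⟨n, hn, s, hs, rfl⟩
    exact ⟨x * n, hm.2.2.1 x n hn, x * s, mul_left_mem_genSet a x hs, by rw [mul_add]⟩
  · rintro x _ ⟨n, hn, s, hs, rfl⟩
    exact ⟨n * x, hm.2.2.2 x n hn, s * x, mul_right_mem_genSet a x hs, by rw [add_mul]⟩

/-- The preimage of a two-sided ideal set under the algebra map, as an ideal of `R`. -/
def preimIdeal (q : Set A) (hq : IsTwoSidedIdealSet q) : Ideal R where
  carrier := ⇑(algebraMap R A) ⁻¹' q
  zero_mem' := by
    simp only [Set.mem_preimage, map_zero]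
    exact hq.1
  add_mem' := fun {a b} ha hb => by
    simp only [Set.mem_preimage, map_add] at *
    exact hq.2.1 _ ha _ hb
  smul_mem' := fun r x hx => by
    simp only [smul_eq_mul, Set.mem_preimage, map_mul] at *
    exact hq.2.2.1 _ _ hx

lemma preimIdeal_isPrime (q : Set A) (hq : IsPrimeTwoSidedIdeal q) :
    (preimIdeal (R := R) q hq.1).IsPrime := by
  constructor
  · intro htop
    have h1 : (1 : A) ∈ q := by
      have h0 : (1 : R) ∈ preimIdeal (R := R) q hq.1 := htop ▸ Submodule.mem_top
      rw [← map_one (algebraMap R A)]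
      exact h0
    apply hq.2.1
    ext x
    simp only [Set.mem_univ, iff_true]
    have := hq.1.2.2.1 x 1 h1
    rwa [mul_one] at this
  · intro x y hxy
    have hxy' : algebraMap R A (x * y) ∈ q := hxy
    have hkey : ∀ z : A, algebraMap R A x * z * algebraMap R A y ∈ q := by
      intro z
      have heq : algebraMap R A x * z * algebraMap R A y
          = algebraMap R A (x * y) * z := by
        rw [mul_assoc, ← Algebra.commutes y z, ← mul_assoc, ← map_mul]
      rw [heq]
      exact hq.1.2.2.2 z _ hxy'
    rcases hq.2.2 _ _ hkey with h | h
    · exact Or.inl h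
    · exact Or.inr h

end Aux

/-- Let `R` be a commutative ring, `A` an `R`-algebra which is finitely generated as an
`R`-module, `I` a two-sided ideal of `A` and `I'` its preimage in `R`. Then the set of
preimages in `R` of prime two-sided ideals of `A` containing `I` equals the set of
(underlying sets of) prime ideals of `R` containing `I'`; in particular every prime ideal
of `R` containing `I'` is the preimage of a prime two-sided ideal of `A` containing `I`. -/
theorem image_V_eq_V_comap {R A : Type*} [CommRing R] [Ring A] [Algebra R A]
    [Module.Finite R A] (I : Set A) (hI : IsTwoSidedIdealSet I) :
    {S : Set R | ∃ q : Set A, IsPrimeTwoSidedIdeal q ∧ I ⊆ q ∧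
        S = ⇑(algebraMap R A) ⁻¹' q} =
    {S : Set R | ∃ p : Ideal R, p.IsPrime ∧ ⇑(algebraMap R A) ⁻¹' I ⊆ ↑p ∧
        S = (p : Set R)} := by
  ext S
  simp only [Set.mem_setOf_eq]
  constructor
  · rintro ⟨q, hq, hIq, rfl⟩
    refine ⟨preimIdeal q hq.1, preimIdeal_isPrime q hq, ?_, rfl⟩
    intro r hr
    exact hIq hr
  · rintro ⟨p, hp, hIp, rfl⟩
    -- set of candidate two-sided ideals
    set N : Submodule R A := tsiSubmodule (R := R) I hI ⊔ p • (⊤ : Submodule R A) with hN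
    have hInI : I ⊆ (N : Set A) := fun i hi =>
      Submodule.mem_sup_left (show i ∈ tsiSubmodule (R := R) I hI from hi)
    have hpN : ∀ r ∈ p, algebraMap R A r ∈ N := by
      intro r hr
      apply Submodule.mem_sup_right
      rw [Algebra.algebraMap_eq_smul_one]
      exact Submodule.smul_mem_smul hr trivial
    have hNts : IsTwoSidedIdealSet (N : Set A) := by
      refine ⟨N.zero_mem, fun a ha b hb => N.add_mem ha hb, ?_, ?_⟩
      · intro x a ha
        obtain ⟨i, hi, n, hn, rfl⟩ := Submodule.mem_sup.1 ha
        rw [mul_add]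
        exact N.add_mem (Submodule.mem_sup_left (hI.2.2.1 x i hi))
          (Submodule.mem_sup_right (mul_mem_smul_top p x hn))
      · intro x a ha
        obtain ⟨i, hi, n, hn, rfl⟩ := Submodule.mem_sup.1 ha
        rw [add_mul]
        exact N.add_mem (Submodule.mem_sup_left (hI.2.2.2 x i hi))
          (Submodule.mem_sup_right (smul_top_mem_mul p x hn))
    have hNpre : ⇑(algebraMap R A) ⁻¹' (N : Set A) ⊆ (p : Set R) := by
      intro r hr
      exact crux I hI p hp hIp hr
    -- Zorn's lemma
    set 𝒮 : Set (Set A) := {J | IsTwoSidedIdealSet J ∧ (N : Set A) ⊆ J ∧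
      ⇑(algebraMap R A) ⁻¹' J ⊆ (p : Set R)} with h𝒮
    have hNS : (N : Set A) ∈ 𝒮 := ⟨hNts, subset_rfl, hNpre⟩
    obtain ⟨m, hNm, hm⟩ := zorn_subset_nonempty 𝒮 (by
      intro c hc hchain hcne
      refine ⟨⋃₀ c, ⟨?_, ?_, ?_⟩, fun s hs => Set.subset_sUnion_of_mem hs⟩
      · obtain ⟨J, hJ⟩ := hcne
        refine ⟨Set.mem_sUnion.2 ⟨J, hJ, (hc hJ).1.1⟩, ?_, ?_, ?_⟩
        · rintro a ⟨J₁, hJ₁, ha⟩ b ⟨J₂, hJ₂, hb⟩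
          rcases hchain.total hJ₁ hJ₂ with h | h
          · exact Set.mem_sUnion.2 ⟨J₂, hJ₂, (hc hJ₂).1.2.1 a (h ha) b hb⟩
          · exact Set.mem_sUnion.2 ⟨J₁, hJ₁, (hc hJ₁).1.2.1 a ha b (h hb)⟩
        · rintro x a ⟨J₁, hJ₁, ha⟩
          exact Set.mem_sUnion.2 ⟨J₁, hJ₁, (hc hJ₁).1.2.2.1 x a ha⟩
        · rintro x a ⟨J₁, hJ₁, ha⟩
          exact Set.mem_sUnion.2 ⟨J₁, hJ₁, (hc hJ₁).1.2.2.2 x a ha⟩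
      · obtain ⟨J, hJ⟩ := hcne
        exact (hc hJ).2.1.trans (Set.subset_sUnion_of_mem hJ)
      · rintro r ⟨J₁, hJ₁, hr⟩
        exact (hc hJ₁).2.2 hr) (N : Set A) hNS
    obtain ⟨hmts, hNsubm, hmpre⟩ := hm.1
    -- m is the required prime two-sided ideal
    have hkey : ∀ c : A, c ∉ m → ∃ u : R, u ∉ p ∧ algebraMap R A u ∈ bigSet m c := by
      intro c hc
      by_contra hcon
      push_neg at hcon
      have hmem : bigSet m c ∈ 𝒮 := by
        refine ⟨bigSet_isTwoSided m hmts c, hNsubm.trans (subset_bigSet m hmts c), ?_⟩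
        intro r hr
        by_contra hrp
        exact hcon r hrp hr
      have : bigSet m c ⊆ m := hm.2 hmem (subset_bigSet m hmts c)
      exact hc (this (mem_bigSet_self m hmts c))
    refine ⟨m, ⟨hmts, ?_, ?_⟩, fun i hi => hNsubm (hInI hi), ?_⟩
    · -- m ≠ univ
      intro huniv
      have h1 : (1 : R) ∈ p := by
        apply hmpre
        simp only [Set.mem_preimage, huniv]
        trivial
      exact hp.ne_top (Ideal.eq_top_of_isUnit_mem p h1 isUnit_one)
    · -- primality
      intro a b hab
      by_contra hcon
      push_neg at hcon
      obtain ⟨ha, hb⟩ := hcon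
      obtain ⟨u, hu, n₁, hn₁, s₁, hs₁, hu'⟩ := hkey a ha
      obtain ⟨v, hv, n₂, hn₂, s₂, hs₂, hv'⟩ := hkey b hb
      have hprod : algebraMap R A (u * v) ∈ m := by
        rw [map_mul, hu', hv']
        have heq : (n₁ + s₁) * (n₂ + s₂) = n₁ * (n₂ + s₂) + (s₁ * n₂ + s₁ * s₂) := by
          noncomm_ring
        rw [heq]
        refine hmts.2.1 _ (hmts.2.2.2 _ _ hn₁) _ (hmts.2.1 _ (hmts.2.2.1 _ _ hn₂) _ ?_)
        exact genSet_mul_genSet hmts hab hs₁ hs₂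
      rcases hp.mem_or_mem (hmpre hprod) with h | h
      · exact hu h
      · exact hv h
    · -- ↑p = preimage of m
      ext r
      constructor
      · intro hr
        exact hNsubm (hpN r hr)
      · intro hr
        exact hmpre hr
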